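/- Let r ≥ 1 be an integer, u > 1 real, and x > 1 the solution of Σ_{j=1}^r x^j = u·r. If r ≤ log u, then x^r > (1 − e^{−1})·r·u and x^r ≤ 1 + r·u. -/

import Mathlib

theorem stmt_9 (r : ℕ) (hr : 1 ≤ r) (u x : ℝ) (hu : 1 < u) (hx : 1 < x)
    (hsaddle : ∑ j ∈ Finset.Icc 1 r, x ^ j = u * r)
    (hrlog : (r : ℝ) ≤ Real.log u) :
    (1 - Real.exp (-1)) * r * u < x ^ r ∧ x ^ r ≤ 1 + r * u := by
  have hx0 : (0:ℝ) < x := lt_trans one_pos hx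
  have hu0 : (0:ℝ) < u := lt_trans one_pos hu
  have hr0 : (0:ℝ) < r := by exact_mod_cast hr
  -- upper bound
  have hupper : x ^ r ≤ u * r := by
    rw [← hsaddle]
    exact Finset.single_le_sum (fun j _ => le_of_lt (pow_pos hx0 j))
      (Finset.mem_Icc.mpr ⟨hr, le_refl r⟩)
  -- u ≤ x ^ r
  have hsum_le : u * r ≤ r * x ^ r := by
    rw [← hsaddle]
    calc ∑ j ∈ Finset.Icc 1 r, x ^ j ≤ ∑ _j ∈ Finset.Icc 1 r, x ^ r := by
          apply Finset.sum_le_sum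
          intro j hj
          exact pow_le_pow_right₀ hx.le (Finset.mem_Icc.mp hj).2
      _ = r * x ^ r := by
          rw [Finset.sum_const, Nat.card_Icc]
          simp [nsmul_eq_mul]
  have huxr : u ≤ x ^ r := by nlinarith
  -- x ≥ e
  have heu : Real.exp r ≤ u := by
    calc Real.exp r ≤ Real.exp (Real.log u) := Real.exp_le_exp.mpr hrlog
      _ = u := Real.exp_log hu0
  have hex : Real.exp 1 ≤ x := by
    apply le_of_pow_le_pow_left₀ (Nat.one_le_iff_ne_zero.mp hr) hx0.le
    calc Real.exp 1 ^ r = Real.exp r := by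
          rw [← Real.exp_nat_mul]; ring_nf
      _ ≤ u := heu
      _ ≤ x ^ r := huxr
  have he' : 1 ≤ Real.exp (-1) * x := by
    have := Real.exp_pos (-1)
    calc (1:ℝ) = Real.exp (-1) * Real.exp 1 := by
          rw [← Real.exp_add]; norm_num
      _ ≤ Real.exp (-1) * x := by
          exact mul_le_mul_of_nonneg_left hex this.le
  -- geometric sum identity
  have key : u * r * (x - 1) = x * (x ^ r - 1) := by
    rw [← hsaddle]
    have h1 : ∑ j ∈ Finset.Icc 1 r, x ^ j = x * ∑ i ∈ Finset.range r, x ^ i := by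
      rw [Finset.mul_sum]
      rw [← Finset.Ico_add_one_right_eq_Icc, Finset.sum_Ico_eq_sum_range]
      simp only [Nat.add_sub_cancel, Nat.succ_sub_one]
      apply Finset.sum_congr rfl
      intro i _
      rw [pow_add, pow_one]
    rw [h1]
    have h2 := geom_sum_mul x r
    nlinarith [h2]
  constructor
  · have hxr0 : (0:ℝ) < x ^ r := pow_pos hx0 r
    have hur : 0 < u * r := mul_pos hu0 hr0
    nlinarith [mul_pos hur (Real.exp_pos (-1))]
  · linarith
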